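/- Let I_0, I_1, I_2, ... be the Itzykson-Zuber variables, defined as formal power series in t_0, t_1, ..., satisfying I_0 = ∑_n (t_n/n!)I_0^n and I_k = ∑_p (I_0^p/p!) t_{p+k}. Then ∂I_0/∂t_0 = 1/(1 - I_1) and ∂I_l/∂t_0 = I_{l+1}/(1 - I_1) for l ≥ 1. -/

import Mathlib

open scoped Nat

noncomputable section

/-- The product (coefficientwise) topology on the big phase space ring `ℚ[[t₀, t₁, …]]`. -/
instance : TopologicalSpace (MvPowerSeries ℕ ℚ) :=
  @Pi.topologicalSpace (ℕ →₀ ℕ) (fun _ => ℚ) (fun _ => inferInstance)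

/-- The formal partial derivative `∂/∂t_i` on `ℚ[[t₀, t₁, …]]` (with `t_n = X n`). -/
def pd (i : ℕ) (f : MvPowerSeries ℕ ℚ) : MvPowerSeries ℕ ℚ :=
  fun s => ((s i : ℚ) + 1) * MvPowerSeries.coeff (R := ℚ) (s + Finsupp.single i 1) f

namespace IZaux

open MvPowerSeries

lemma coeff_pd (i : ℕ) (f : MvPowerSeries ℕ ℚ) (s : ℕ →₀ ℕ) :
    MvPowerSeries.coeff (R := ℚ) s (pd i f)
      = ((s i : ℚ) + 1) * MvPowerSeries.coeff (R := ℚ) (s + Finsupp.single i 1) f := rfl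

lemma key_sum (i : ℕ) (f g : MvPowerSeries ℕ ℚ) (s : ℕ →₀ ℕ) :
    ∑ x ∈ Finset.HasAntidiagonal.antidiagonal ((s + Finsupp.single i 1 : ℕ →₀ ℕ)),
        ((x.1 i : ℕ) : ℚ) * (MvPowerSeries.coeff (R := ℚ) x.1 f * MvPowerSeries.coeff (R := ℚ) x.2 g)
      = ∑ x ∈ Finset.HasAntidiagonal.antidiagonal s,
        (((x.1 i : ℕ) : ℚ) + 1) *
          (MvPowerSeries.coeff (R := ℚ) (x.1 + Finsupp.single i 1) f * MvPowerSeries.coeff (R := ℚ) x.2 g) := by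
  classical
  rw [← Finset.sum_filter_of_ne (p := fun x : (ℕ →₀ ℕ) × (ℕ →₀ ℕ) => 1 ≤ x.1 i)
    (by intro x _ hx
        by_contra h
        push_neg at h
        rw [Nat.lt_one_iff] at h
        simp [h] at hx)]
  refine (Finset.sum_bij' (fun x _ => (x.1 + Finsupp.single i 1, x.2))
    (fun x _ => (x.1 - Finsupp.single i 1, x.2)) ?_ ?_ ?_ ?_ ?_).symm
  · intro a ha
    rw [Finset.HasAntidiagonal.mem_antidiagonal] at ha
    rw [Finset.mem_filter, Finset.HasAntidiagonal.mem_antidiagonal]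
    refine ⟨by rw [add_right_comm, ha], by simp [Finsupp.add_apply]⟩
  · intro a ha
    rw [Finset.mem_filter, Finset.HasAntidiagonal.mem_antidiagonal] at ha
    obtain ⟨ha, hi⟩ := ha
    have hle : Finsupp.single i 1 ≤ a.1 := Finsupp.single_le_iff.mpr hi
    rw [Finset.HasAntidiagonal.mem_antidiagonal]
    have h1 : a.1 - Finsupp.single i 1 + Finsupp.single i 1 = a.1 := tsub_add_cancel_of_le hle
    have h2 : a.1 - Finsupp.single i 1 + a.2 + Finsupp.single i 1
        = s + Finsupp.single i 1 := by
      rw [add_right_comm, h1, ha]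
    exact add_right_cancel h2
  · intro a _
    simp
  · intro a ha
    rw [Finset.mem_filter, Finset.HasAntidiagonal.mem_antidiagonal] at ha
    have hle : Finsupp.single i 1 ≤ a.1 := Finsupp.single_le_iff.mpr ha.2
    simp [tsub_add_cancel_of_le hle]
  · intro a _
    have : (((a.1 + Finsupp.single i 1 : ℕ →₀ ℕ)) i : ℚ) = (a.1 i : ℚ) + 1 := by
      simp [Finsupp.add_apply]
    rw [this]

lemma key_sum' (i : ℕ) (f g : MvPowerSeries ℕ ℚ) (s : ℕ →₀ ℕ) :
    ∑ x ∈ Finset.HasAntidiagonal.antidiagonal ((s + Finsupp.single i 1 : ℕ →₀ ℕ)),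
        ((x.2 i : ℕ) : ℚ) * (MvPowerSeries.coeff (R := ℚ) x.1 f * MvPowerSeries.coeff (R := ℚ) x.2 g)
      = ∑ x ∈ Finset.HasAntidiagonal.antidiagonal s,
        (((x.2 i : ℕ) : ℚ) + 1) *
          (MvPowerSeries.coeff (R := ℚ) x.1 f * MvPowerSeries.coeff (R := ℚ) (x.2 + Finsupp.single i 1) g) := by
  classical
  rw [← Finset.sum_filter_of_ne (p := fun x : (ℕ →₀ ℕ) × (ℕ →₀ ℕ) => 1 ≤ x.2 i)
    (by intro x _ hx
        by_contra h
        push_neg at h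
        rw [Nat.lt_one_iff] at h
        simp [h] at hx)]
  refine (Finset.sum_bij' (fun x _ => (x.1, x.2 + Finsupp.single i 1))
    (fun x _ => (x.1, x.2 - Finsupp.single i 1)) ?_ ?_ ?_ ?_ ?_).symm
  · intro a ha
    rw [Finset.HasAntidiagonal.mem_antidiagonal] at ha
    rw [Finset.mem_filter, Finset.HasAntidiagonal.mem_antidiagonal]
    refine ⟨by rw [← add_assoc, ha], by simp [Finsupp.add_apply]⟩
  · intro a ha
    rw [Finset.mem_filter, Finset.HasAntidiagonal.mem_antidiagonal] at ha
    obtain ⟨ha, hi⟩ := ha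
    have hle : Finsupp.single i 1 ≤ a.2 := Finsupp.single_le_iff.mpr hi
    rw [Finset.HasAntidiagonal.mem_antidiagonal]
    have h1 : a.2 - Finsupp.single i 1 + Finsupp.single i 1 = a.2 := tsub_add_cancel_of_le hle
    have h2 : a.1 + (a.2 - Finsupp.single i 1) + Finsupp.single i 1
        = s + Finsupp.single i 1 := by
      rw [add_assoc, h1, ha]
    exact add_right_cancel h2
  · intro a _
    simp
  · intro a ha
    rw [Finset.mem_filter, Finset.HasAntidiagonal.mem_antidiagonal] at ha
    have hle : Finsupp.single i 1 ≤ a.2 := Finsupp.single_le_iff.mpr ha.2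
    simp [tsub_add_cancel_of_le hle]
  · intro a _
    have : (((a.2 + Finsupp.single i 1 : ℕ →₀ ℕ)) i : ℚ) = (a.2 i : ℚ) + 1 := by
      simp [Finsupp.add_apply]
    rw [this]

lemma pd_mul (i : ℕ) (f g : MvPowerSeries ℕ ℚ) :
    pd i (f * g) = pd i f * g + f * pd i g := by
  classical
  ext s
  rw [map_add, coeff_pd, MvPowerSeries.coeff_mul, MvPowerSeries.coeff_mul,
    MvPowerSeries.coeff_mul, Finset.mul_sum]
  have step : ∀ x ∈ Finset.HasAntidiagonal.antidiagonal ((s + Finsupp.single i 1 : ℕ →₀ ℕ)),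
      ((s i : ℚ) + 1) * (MvPowerSeries.coeff (R := ℚ) x.1 f * MvPowerSeries.coeff (R := ℚ) x.2 g)
        = ((x.1 i : ℕ) : ℚ) * (MvPowerSeries.coeff (R := ℚ) x.1 f * MvPowerSeries.coeff (R := ℚ) x.2 g)
          + ((x.2 i : ℕ) : ℚ) * (MvPowerSeries.coeff (R := ℚ) x.1 f * MvPowerSeries.coeff (R := ℚ) x.2 g) := by
    intro x hx
    rw [Finset.HasAntidiagonal.mem_antidiagonal] at hx
    have h1 : x.1 i + x.2 i = s i + 1 := by
      have := congrArg (fun t => t i) hx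
      simpa [Finsupp.add_apply] using this
    have hq : ((x.1 i : ℕ) : ℚ) + ((x.2 i : ℕ) : ℚ) = (s i : ℚ) + 1 := by exact_mod_cast h1
    rw [← add_mul, hq]
  rw [Finset.sum_congr rfl step, Finset.sum_add_distrib, key_sum, key_sum']
  congr 1
  · apply Finset.sum_congr rfl
    intro x _
    rw [coeff_pd]
    ring
  · apply Finset.sum_congr rfl
    intro x _
    rw [coeff_pd]
    ring


lemma pd_smul (i : ℕ) (c : ℚ) (f : MvPowerSeries ℕ ℚ) : pd i (c • f) = c • pd i f := by
  ext s
  simp only [coeff_pd, map_smul, smul_eq_mul]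
  ring

lemma pd_one (i : ℕ) : pd i (1 : MvPowerSeries ℕ ℚ) = 0 := by
  ext s
  have h : ((s + Finsupp.single i 1 : ℕ →₀ ℕ)) ≠ 0 := by
    intro h
    have := congrArg (fun t => t i) h
    simp [Finsupp.add_apply] at this
  simp [coeff_pd, MvPowerSeries.coeff_one, h]

lemma pd_X (i j : ℕ) : pd i (MvPowerSeries.X j : MvPowerSeries ℕ ℚ)
    = if j = i then 1 else 0 := by
  ext s
  rw [coeff_pd, MvPowerSeries.coeff_X]
  by_cases hji : j = i
  · subst hji
    by_cases hs : s = 0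
    · subst hs; simp
    · have hne : ((s + Finsupp.single j 1 : ℕ →₀ ℕ)) ≠ Finsupp.single j 1 := by
        intro h'
        apply hs
        have h2 : s + Finsupp.single j 1 = 0 + Finsupp.single j 1 := by rw [zero_add]; exact h'
        exact add_right_cancel h2
      simp [hne, hs, MvPowerSeries.coeff_one]
  · have hne : ((s + Finsupp.single i 1 : ℕ →₀ ℕ)) ≠ Finsupp.single j 1 := by
      intro h'
      have := congrArg (fun t => t i) h'
      simp [Finsupp.add_apply, Finsupp.single_apply, hji] at this
    simp [hne, hji, MvPowerSeries.coeff_zero]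

lemma pd_pow (i : ℕ) (f : MvPowerSeries ℕ ℚ) (p : ℕ) :
    pd i (f ^ (p + 1)) = ((p : ℚ) + 1) • (f ^ p * pd i f) := by
  induction p with
  | zero => simp [pd_mul, pd_one, pow_one]
  | succ m ih =>
    rw [pow_succ, pd_mul, ih]
    have h1 : ((m : ℚ) + 1) • (f ^ m * pd i f) * f = ((m : ℚ) + 1) • (f ^ (m + 1) * pd i f) := by
      rw [smul_mul_assoc, mul_right_comm, ← pow_succ]
    rw [h1]
    push_cast
    conv_rhs => rw [add_smul, one_smul]

lemma hasSum_pd {f : ℕ → MvPowerSeries ℕ ℚ} {S : MvPowerSeries ℕ ℚ}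
    (h : HasSum f S) (i : ℕ) : HasSum (fun n => pd i (f n)) (pd i S) := by
  have hc : ∀ s, HasSum (fun n => f n s) (S s) := Pi.hasSum.mp h
  refine Pi.hasSum.mpr fun s => ?_
  exact (hc (s + Finsupp.single i 1)).mul_left ((s i : ℚ) + 1)

lemma hasSum_mul_right {f : ℕ → MvPowerSeries ℕ ℚ} {S : MvPowerSeries ℕ ℚ}
    (h : HasSum f S) (g : MvPowerSeries ℕ ℚ) :
    HasSum (fun n => f n * g) (S * g) := by
  classical
  have hc : ∀ s, HasSum (fun n => f n s) (S s) := Pi.hasSum.mp h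
  refine Pi.hasSum.mpr fun s => ?_
  have h1 : ∀ n : ℕ, (f n * g) s = ∑ x ∈ Finset.HasAntidiagonal.antidiagonal s,
      MvPowerSeries.coeff (R := ℚ) x.1 (f n) * MvPowerSeries.coeff (R := ℚ) x.2 g :=
    fun n => MvPowerSeries.coeff_mul s (f n) g
  have h2 : (S * g) s = ∑ x ∈ Finset.HasAntidiagonal.antidiagonal s,
      MvPowerSeries.coeff (R := ℚ) x.1 S * MvPowerSeries.coeff (R := ℚ) x.2 g :=
    MvPowerSeries.coeff_mul s S g
  rw [funext h1, h2]
  exact hasSum_sum fun x _ => (hc x.1).mul_right _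

instance : IsTopologicalAddGroup (MvPowerSeries ℕ ℚ) :=
  inferInstanceAs (IsTopologicalAddGroup ((ℕ →₀ ℕ) → ℚ))

instance : T2Space (MvPowerSeries ℕ ℚ) :=
  inferInstanceAs (T2Space ((ℕ →₀ ℕ) → ℚ))


lemma fact_smul (m : ℕ) (x : MvPowerSeries ℕ ℚ) :
    (((m + 1)! : ℚ))⁻¹ • (((m : ℚ) + 1) • x) = ((m ! : ℚ))⁻¹ • x := by
  rw [smul_smul]
  congr 1
  have h1 : ((m ! : ℚ)) ≠ 0 := Nat.cast_ne_zero.mpr (Nat.factorial_ne_zero m)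
  have h2 : ((m : ℚ) + 1) ≠ 0 := by positivity
  rw [Nat.factorial_succ]
  push_cast
  field_simp

end IZaux

/-- Let `I₀, I₁, I₂, …` be the Itzykson–Zuber variables in `ℚ[[t₀, t₁, …]]`, satisfying
`I₀ = ∑ₙ (tₙ/n!) I₀ⁿ` and `I_k = ∑_p (I₀^p/p!) t_{p+k}`.  Then `∂I₀/∂t₀ = 1/(1-I₁)` and
`∂I_l/∂t₀ = I_{l+1}/(1-I₁)` for `l ≥ 1`. -/
theorem itzykson_zuber_deriv_t0 (I : ℕ → MvPowerSeries ℕ ℚ)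
    (h0 : MvPowerSeries.constantCoeff (σ := ℕ) (R := ℚ) (I 0) = 0)
    (hI0 : HasSum (fun n : ℕ => (n ! : ℚ)⁻¹ • (MvPowerSeries.X n * I 0 ^ n)) (I 0))
    (hIk : ∀ k : ℕ, 1 ≤ k →
      HasSum (fun p : ℕ => (p ! : ℚ)⁻¹ • (I 0 ^ p * MvPowerSeries.X (p + k))) (I k)) :
    pd 0 (I 0) = (1 - I 1)⁻¹ ∧ ∀ l : ℕ, 1 ≤ l → pd 0 (I l) = I (l + 1) * (1 - I 1)⁻¹ := by
  classical
  set D := pd 0 (I 0) with hDdef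
  -- constant coefficient of I 1
  have hc1 : MvPowerSeries.constantCoeff (σ := ℕ) (R := ℚ) (I 1) = 0 := by
    have h : HasSum (fun p : ℕ => MvPowerSeries.coeff (R := ℚ) (0 : ℕ →₀ ℕ)
          ((p ! : ℚ)⁻¹ • (I 0 ^ p * MvPowerSeries.X (p + 1))))
        (MvPowerSeries.coeff (R := ℚ) (0 : ℕ →₀ ℕ) (I 1)) := Pi.hasSum.mp (hIk 1 le_rfl) 0
    have hz : ∀ p : ℕ, MvPowerSeries.coeff (R := ℚ) (0 : ℕ →₀ ℕ)
        ((p ! : ℚ)⁻¹ • (I 0 ^ p * MvPowerSeries.X (p + 1))) = 0 := by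
      intro p
      rw [map_smul, smul_eq_mul, MvPowerSeries.coeff_zero_eq_constantCoeff_apply, map_mul,
        MvPowerSeries.constantCoeff_X, mul_zero, mul_zero]
    rw [funext hz] at h
    have h0' := hasSum_zero (α := ℚ) (β := ℕ) (L := SummationFilter.unconditional ℕ)
    rw [← MvPowerSeries.coeff_zero_eq_constantCoeff_apply (I 1)]
    exact (h0'.unique h).symm
  have hne : MvPowerSeries.constantCoeff (σ := ℕ) (R := ℚ) (1 - I 1) ≠ 0 := by
    rw [map_sub, map_one, hc1, sub_zero]
    exact one_ne_zero
  -- the shifted family for part 1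
  set A : ℕ → MvPowerSeries ℕ ℚ := fun n =>
    if n = 0 then 1 else (((n - 1)! : ℚ)⁻¹ • (I 0 ^ (n - 1) * MvPowerSeries.X n)) * D with hA
  have hD : HasSum A D := by
    have h := IZaux.hasSum_pd hI0 0
    have hterm : (fun n : ℕ => pd 0 ((n ! : ℚ)⁻¹ • (MvPowerSeries.X n * I 0 ^ n))) = A := by
      funext n
      cases n with
      | zero =>
        simp only [hA, Nat.factorial_zero, Nat.cast_one, inv_one, one_smul, pow_zero,
          mul_one, if_pos rfl]
        rw [IZaux.pd_X]
        simp
      | succ m =>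
        rw [IZaux.pd_smul, IZaux.pd_mul, IZaux.pd_pow, IZaux.pd_X]
        simp only [hA, Nat.succ_ne_zero, if_false, Nat.succ_sub_one, zero_mul, zero_add]
        rw [mul_smul_comm, IZaux.fact_smul, smul_mul_assoc]
        congr 1
        ring
    rwa [hterm] at h
  have hB : HasSum (fun p : ℕ => A (p + 1)) (I 1 * D) := by
    have h := IZaux.hasSum_mul_right (hIk 1 le_rfl) D
    have hsh : (fun p : ℕ => ((p ! : ℚ)⁻¹ • (I 0 ^ p * MvPowerSeries.X (p + 1))) * D)
        = fun p : ℕ => A (p + 1) := by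
      funext p
      simp [hA]
    rwa [hsh] at h
  have h4 := (hasSum_nat_add_iff (f := A) 1).mp hB
  have h5 : D = I 1 * D + 1 := by
    refine hD.unique ?_
    simpa [hA] using h4
  have hmul : D * (1 - I 1) = 1 := by linear_combination h5
  have hpart1 : D = (1 - I 1)⁻¹ := (MvPowerSeries.eq_inv_iff_mul_eq_one hne).mpr hmul
  refine ⟨hpart1, fun l hl => ?_⟩
  -- part 2
  set B : ℕ → MvPowerSeries ℕ ℚ := fun p =>
    if p = 0 then 0
    else (((p - 1)! : ℚ)⁻¹ • (I 0 ^ (p - 1) * MvPowerSeries.X (p + l))) * D with hBdef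
  have hDl : HasSum B (pd 0 (I l)) := by
    have h := IZaux.hasSum_pd (hIk l hl) 0
    have hterm : (fun p : ℕ => pd 0 ((p ! : ℚ)⁻¹ • (I 0 ^ p * MvPowerSeries.X (p + l)))) = B := by
      funext p
      cases p with
      | zero =>
        simp only [hBdef, pow_zero, Nat.factorial_zero, Nat.cast_one, inv_one, one_smul,
          one_mul, zero_add, if_pos rfl]
        rw [IZaux.pd_X]
        have hl0 : ¬l = 0 := by omega
        simp [hl0]
      | succ m =>
        rw [IZaux.pd_smul, IZaux.pd_mul, IZaux.pd_pow, IZaux.pd_X]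
        have hml : ¬(m + 1 + l = 0) := by omega
        simp only [hBdef, Nat.succ_ne_zero, if_false, Nat.succ_sub_one, hml, mul_zero, add_zero]
        rw [smul_mul_assoc (((m : ℚ) + 1)) (I 0 ^ m * D), IZaux.fact_smul, smul_mul_assoc]
        congr 1
        ring
    rwa [hterm] at h
  have hB2 : HasSum (fun q : ℕ => B (q + 1)) (I (l + 1) * D) := by
    have h := IZaux.hasSum_mul_right (hIk (l + 1) (by omega)) D
    have hsh : (fun q : ℕ => ((q ! : ℚ)⁻¹ • (I 0 ^ q * MvPowerSeries.X (q + (l + 1)))) * D)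
        = fun q : ℕ => B (q + 1) := by
      funext q
      have hq : q + 1 + l = q + (l + 1) := by omega
      simp [hBdef, hq]
    rwa [hsh] at h
  have h4' := (hasSum_nat_add_iff (f := B) 1).mp hB2
  have h5' : pd 0 (I l) = I (l + 1) * D := by
    refine hDl.unique ?_
    simpa [hBdef] using h4'
  rw [h5', hpart1]

end
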